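/- arXiv:0704.1039 — 3 statements merged into one kernel-verified Lean document; each statement's English description precedes it below -/
import Mathlib

section
/- Let φ : E → F be a surjective linear map of (real) vector spaces, ℓ : E → ℝ a nonzero linear functional with ker φ ⊆ ker ℓ, let x_y ∈ E and set y = φ(x_y). Define φ̃ : E → F by φ̃(x) = φ(x) − ℓ(x)·y. Then the image of φ̃ equals φ(ker ℓ) if and only if ℓ(x_y) = 1. -/
theorem stmt_0 (E F : Type*) [AddCommGroup E] [Module ℝ E] [AddCommGroup F] [Module ℝ F]
    (φ : E →ₗ[ℝ] F) (hφ : Function.Surjective φ)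
    (ℓ : E →ₗ[ℝ] ℝ) (hℓ : ℓ ≠ 0) (hker : LinearMap.ker φ ≤ LinearMap.ker ℓ)
    (x_y : E) (y : F) (hy : y = φ x_y) :
    LinearMap.range (φ - ℓ.smulRight y) = (LinearMap.ker ℓ).map φ ↔ ℓ x_y = 1 := by
  constructor
  · intro h
    -- choose z with ℓ z = 1
    obtain ⟨u, hu⟩ : ∃ u, ℓ u ≠ 0 := by
      by_contra hc
      push_neg at hc
      exact hℓ (LinearMap.ext fun x => by simpa using hc x)
    set z := (ℓ u)⁻¹ • u with hz
    have hz1 : ℓ z = 1 := by simp [hz, inv_mul_cancel₀ hu]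
    have hmem : (φ - ℓ.smulRight y) z ∈ (LinearMap.ker ℓ).map φ := by
      rw [← h]; exact LinearMap.mem_range_self _ z
    obtain ⟨w, hw, hweq⟩ := hmem
    have hw0 : ℓ w = 0 := hw
    have hker0 : φ (z - x_y - w) = 0 := by
      simp only [LinearMap.sub_apply, LinearMap.smulRight_apply, hz1, one_smul, hy] at hweq
      simp [map_sub, ← hweq, hy]
    have := hker hker0
    simp only [LinearMap.mem_ker, map_sub] at this
    rw [hz1, hw0] at this
    linarith
  · intro h
    apply le_antisymm
    · rintro _ ⟨x, rfl⟩
      refine ⟨x - ℓ x • x_y, ?_, ?_⟩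
      · simp [LinearMap.mem_ker, h]
      · simp [hy, map_sub, sub_eq_sub_iff_comm]
    · rintro _ ⟨w, hw, rfl⟩
      refine ⟨w, ?_⟩
      simp [LinearMap.mem_ker.mp hw]
end

section
/- Let φ : E → F be a surjective linear map of real vector spaces, ℓ : E → ℝ a nonzero linear functional with ker φ ⊆ ker ℓ, x_y ∈ E with ℓ(x_y) = 1, y = φ(x_y), and φ̃(x) = φ(x) − ℓ(x)y. Then y ∉ im φ̃, and F = im φ̃ ⊕ ℝ·y, i.e. y spans a one-dimensional complement of the image of φ̃. -/
theorem stmt_1 (E F : Type*) [AddCommGroup E] [Module ℝ E] [AddCommGroup F] [Module ℝ F]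
    (φ : E →ₗ[ℝ] F) (hφ : Function.Surjective φ)
    (ℓ : E →ₗ[ℝ] ℝ) (hℓ : ℓ ≠ 0) (hker : LinearMap.ker φ ≤ LinearMap.ker ℓ)
    (x_y : E) (hxy : ℓ x_y = 1) (y : F) (hy : y = φ x_y) :
    y ∉ LinearMap.range (φ - ℓ.smulRight y) ∧
      IsCompl (LinearMap.range (φ - ℓ.smulRight y)) (Submodule.span ℝ {y}) := by
  set ψ := φ - ℓ.smulRight y with hψdef
  have hψ : ∀ x, ψ x = φ x - ℓ x • y := fun x => rfl
  have hrange : ∀ z, z ∈ LinearMap.range ψ ↔ ∃ u, ℓ u = 0 ∧ φ u = z := by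
    intro z
    constructor
    · rintro ⟨x, rfl⟩
      refine ⟨x - ℓ x • x_y, by simp [hxy], ?_⟩
      simp [hψ, hy, map_smul, sub_smul]
    · rintro ⟨u, hu0, rfl⟩
      exact ⟨u, by simp [hψ, hu0]⟩
  have key : ∀ u (c : ℝ), ℓ u = 0 → φ u = c • y → c = 0 := by
    intro u c hu0 huc
    have hk : u - c • x_y ∈ LinearMap.ker φ := by
      simp [LinearMap.mem_ker, map_sub, map_smul, huc, hy]
    have := hker hk
    simp [LinearMap.mem_ker, map_sub, map_smul, hu0, hxy] at this
    linarith
  have hynot : y ∉ LinearMap.range ψ := by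
    intro h
    obtain ⟨u, hu0, hu⟩ := (hrange y).1 h
    have : (1 : ℝ) = 0 := key u 1 hu0 (by simpa using hu)
    norm_num at this
  refine ⟨hynot, ?_, ?_⟩
  · rw [Submodule.disjoint_def]
    intro v hv hv2
    obtain ⟨c, rfl⟩ := Submodule.mem_span_singleton.1 hv2
    obtain ⟨u, hu0, hu⟩ := (hrange _).1 hv
    rw [key u c hu0 hu, zero_smul]
  · rw [codisjoint_iff, eq_top_iff]
    intro f _
    obtain ⟨x, rfl⟩ := hφ f
    have : φ x = ψ x + ℓ x • y := by simp [hψ]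
    rw [this]
    exact Submodule.add_mem_sup (LinearMap.mem_range_self ψ x)
      (Submodule.smul_mem _ _ (Submodule.mem_span_singleton_self y))
end

section
/- Let ρ > 0 and let f : [s₀, s₁] → ℝ be twice differentiable with f''(s) ≥ 4ρ² f(s) for all s ∈ [s₀, s₁]. Then for all s ∈ [s₀, s₁], f(s) ≤ max(f(s₀), f(s₁)) · cosh(2ρ(s − (s₀+s₁)/2)) / cosh(ρ(s₁ − s₀)). -/
theorem stmt_6 (ρ : ℝ) (hρ : 0 < ρ) (s₀ s₁ : ℝ) (hs : s₀ ≤ s₁)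
    (f f' f'' : ℝ → ℝ)
    (hf : ∀ s ∈ Set.Icc s₀ s₁, HasDerivWithinAt f (f' s) (Set.Icc s₀ s₁) s)
    (hf' : ∀ s ∈ Set.Icc s₀ s₁, HasDerivWithinAt f' (f'' s) (Set.Icc s₀ s₁) s)
    (hineq : ∀ s ∈ Set.Icc s₀ s₁, 4 * ρ ^ 2 * f s ≤ f'' s) :
    ∀ s ∈ Set.Icc s₀ s₁,
      f s ≤ max (f s₀) (f s₁) * Real.cosh (2 * ρ * (s - (s₀ + s₁) / 2)) /
        Real.cosh (ρ * (s₁ - s₀)) := by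
  set c : ℝ := 2 * ρ with hc
  set m : ℝ := (s₀ + s₁) / 2 with hm
  set C : ℝ → ℝ := fun t => Real.cosh (c * (t - m)) with hCdef
  set S : ℝ → ℝ := fun t => Real.sinh (c * (t - m)) with hSdef
  set I : Set ℝ := Set.Icc s₀ s₁ with hI
  have hCpos : ∀ t, 0 < C t := fun t => Real.cosh_pos (c * (t - m))
  have hlin : ∀ t : ℝ, HasDerivAt (fun t => c * (t - m)) c t := by
    intro t
    simpa using ((hasDerivAt_id t).sub_const m).const_mul c
  have hC : ∀ t, HasDerivAt C (c * S t) t := by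
    intro t
    simpa [hCdef, hSdef, mul_comm, Function.comp_def] using
      (Real.hasDerivAt_cosh (c * (t - m))).comp t (hlin t)
  have hS : ∀ t, HasDerivAt S (c * C t) t := by
    intro t
    simpa [hCdef, hSdef, mul_comm, Function.comp_def] using
      (Real.hasDerivAt_sinh (c * (t - m))).comp t (hlin t)
  set v : ℝ → ℝ := fun t => f' t * C t - f t * (c * S t) with hvdef
  have hv : ∀ t ∈ I, HasDerivWithinAt v (C t * (f'' t - c ^ 2 * f t)) I t := by
    intro t ht
    have h1 := (hf' t ht).mul (hC t).hasDerivWithinAt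
    have h2 := (hf t ht).mul ((hS t).const_mul c).hasDerivWithinAt
    have := h1.sub h2
    refine this.congr_deriv ?_
    ring
  have hvmono : MonotoneOn v I := by
    apply monotoneOn_of_hasDerivWithinAt_nonneg (convex_Icc s₀ s₁)
      (fun t ht => (hv t ht).continuousWithinAt)
      (fun t ht => (hv t (interior_subset ht)).mono interior_subset)
    intro t ht
    have ht' : t ∈ I := interior_subset ht
    have h4 : 4 * ρ ^ 2 * f t ≤ f'' t := hineq t ht'
    have : 0 ≤ f'' t - c ^ 2 * f t := by
      have : c ^ 2 = 4 * ρ ^ 2 := by rw [hc]; ring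
      rw [this]; linarith
    exact mul_nonneg (hCpos t).le this
  set u : ℝ → ℝ := fun t => f t / C t with hudef
  have hu : ∀ t ∈ I, HasDerivWithinAt u (v t / C t ^ 2) I t := by
    intro t ht
    exact (hf t ht).div (hC t).hasDerivWithinAt (hCpos t).ne'
  have hucont : ContinuousOn u I := fun t ht => (hu t ht).continuousWithinAt
  -- endpoint values of C
  have hK : Real.cosh (ρ * (s₁ - s₀)) = C s₀ := by
    rw [hCdef]
    simp only
    rw [show c * (s₀ - m) = -(ρ * (s₁ - s₀)) by rw [hc, hm]; ring, Real.cosh_neg]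
  have hK' : C s₁ = C s₀ := by
    rw [hCdef]
    simp only
    rw [show c * (s₁ - m) = ρ * (s₁ - s₀) by rw [hc, hm]; ring,
      show c * (s₀ - m) = -(ρ * (s₁ - s₀)) by rw [hc, hm]; ring, Real.cosh_neg]
  intro s hsI
  obtain ⟨hs0, hs1⟩ := hsI
  have hsI : s ∈ I := ⟨hs0, hs1⟩
  have key : u s ≤ max (u s₀) (u s₁) := by
    rcases le_or_gt (v s) 0 with hvs | hvs
    · -- u antitone on [s₀, s], so u s ≤ u s₀
      have hsub : Set.Icc s₀ s ⊆ I := Set.Icc_subset_Icc le_rfl hs1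
      have hanti : AntitoneOn u (Set.Icc s₀ s) := by
        apply antitoneOn_of_hasDerivWithinAt_nonpos (convex_Icc s₀ s)
          (hucont.mono hsub)
          (fun t ht => (hu t (hsub (interior_subset ht))).mono
            ((interior_subset).trans hsub))
        intro t ht
        have ht' : t ∈ Set.Icc s₀ s := interior_subset ht
        have hvt : v t ≤ v s := hvmono (hsub ht') hsI ht'.2
        exact div_nonpos_of_nonpos_of_nonneg (hvt.trans hvs) (sq_nonneg _)
      have := hanti (Set.left_mem_Icc.mpr hs0) ⟨hs0, le_rfl⟩ hs0
      exact this.trans (le_max_left _ _)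
    · -- u monotone on [s, s₁], so u s ≤ u s₁
      have hsub : Set.Icc s s₁ ⊆ I := Set.Icc_subset_Icc hs0 le_rfl
      have hmono : MonotoneOn u (Set.Icc s s₁) := by
        apply monotoneOn_of_hasDerivWithinAt_nonneg (convex_Icc s s₁)
          (hucont.mono hsub)
          (fun t ht => (hu t (hsub (interior_subset ht))).mono
            ((interior_subset).trans hsub))
        intro t ht
        have ht' : t ∈ Set.Icc s s₁ := interior_subset ht
        have hvt : v s ≤ v t := hvmono hsI (hsub ht') ht'.1
        exact div_nonneg (hvs.le.trans hvt) (sq_nonneg _)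
      have := hmono ⟨le_rfl, hs1⟩ (Set.right_mem_Icc.mpr hs1) hs1
      exact this.trans (le_max_right _ _)
  -- convert u bound to the goal
  have hCs0 : 0 < C s₀ := hCpos s₀
  have humax : max (u s₀) (u s₁) = max (f s₀) (f s₁) / C s₀ := by
    rw [hudef]; simp only [hK']
    exact max_div_div_right hCs0.le _ _
  rw [hK]
  have h1 : f s / C s ≤ max (f s₀) (f s₁) / C s₀ := humax ▸ key
  have h2 : f s ≤ max (f s₀) (f s₁) / C s₀ * C s :=
    (div_le_iff₀ (hCpos s)).mp h1
  calc f s ≤ max (f s₀) (f s₁) / C s₀ * C s := h2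
    _ = max (f s₀) (f s₁) * C s / C s₀ := by ring
end
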